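/- Let A be an associative algebra, M an A-bimodule, and ∇_ℓ : M → Ω¹A ⊗_A M a left connection (right A-linear, with ∇_ℓ(am) = a∇_ℓ(m) + da⊗m). Then a left connection on an A-bimodule M exists if M is a projective A⊗A^op-module; conversely if a connection (∇_ℓ, ∇_r) exists then M is projective as an A⊗A^op-module. -/

import Mathlib

open TensorProduct

section

variable {k A M : Type} [Field k] [Ring A] [Algebra k A]
  [AddCommGroup M] [Module k M] [Module A M] [Module Aᵐᵒᵖ M]
  [IsScalarTower k A M] [IsScalarTower k Aᵐᵒᵖ M] [SMulCommClass A Aᵐᵒᵖ M]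
  [SMulCommClass A k M] [SMulCommClass Aᵐᵒᵖ k M]

/-- The left action map `A ⊗ M → M`, `a ⊗ m ↦ a • m`.  Its kernel is the
standard model of `Ω¹A ⊗_A M` inside `A ⊗ₖ M`. -/
noncomputable def actL (k A M : Type) [Field k] [Ring A] [Algebra k A]
    [AddCommGroup M] [Module k M] [Module A M]
    [IsScalarTower k A M] [SMulCommClass A k M] : A ⊗[k] M →ₗ[k] M :=
  TensorProduct.lift (LinearMap.mk₂ k (fun a m => a • m)
    (fun a a' m => add_smul a a' m)
    (fun c a m => smul_assoc c a m)
    (fun a m m' => smul_add a m m')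
    (fun c a m => smul_comm a c m |>.symm ▸ rfl))

/-- The right action map `M ⊗ A → M`, `m ⊗ b ↦ m • b = op b • m`.  Its kernel is
the standard model of `M ⊗_A Ω¹A` inside `M ⊗ₖ A`. -/
noncomputable def actR (k A M : Type) [Field k] [Ring A] [Algebra k A]
    [AddCommGroup M] [Module k M] [Module Aᵐᵒᵖ M]
    [IsScalarTower k Aᵐᵒᵖ M] [SMulCommClass Aᵐᵒᵖ k M] : M ⊗[k] A →ₗ[k] M :=
  TensorProduct.lift (LinearMap.mk₂ k (fun m b => MulOpposite.op b • m)
    (fun m m' b => smul_add (MulOpposite.op b) m m')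
    (fun c m b => smul_comm (MulOpposite.op b) c m)
    (fun m b b' => by
      show MulOpposite.op (b + b') • m = MulOpposite.op b • m + MulOpposite.op b' • m
      rw [MulOpposite.op_add, add_smul])
    (fun c m b => by
      show MulOpposite.op (c • b) • m = c • MulOpposite.op b • m
      rw [MulOpposite.op_smul, smul_assoc]))

/-- The left `A`-action of `a` on the first factor of `A ⊗ M`. -/
noncomputable def lmul₁ (k A M : Type) [Field k] [Ring A] [Algebra k A]
    [AddCommGroup M] [Module k M] (a : A) : A ⊗[k] M →ₗ[k] A ⊗[k] M :=
  LinearMap.rTensor M (LinearMap.mulLeft k a)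

/-- The right `A`-action of `b` on the second factor of `M ⊗ A`. -/
noncomputable def rmul₂ (k A M : Type) [Field k] [Ring A] [Algebra k A]
    [AddCommGroup M] [Module k M] (b : A) : M ⊗[k] A →ₗ[k] M ⊗[k] A :=
  LinearMap.lTensor M (LinearMap.mulRight k b)

/-- The right action of `b` on the `M`-factor of `A ⊗ M`. -/
noncomputable def rop₂ (k A M : Type) [Field k] [Ring A] [Algebra k A]
    [AddCommGroup M] [Module k M] [Module Aᵐᵒᵖ M] [SMulCommClass Aᵐᵒᵖ k M]
    (b : A) : A ⊗[k] M →ₗ[k] A ⊗[k] M :=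
  LinearMap.lTensor A
    { toFun := fun m => MulOpposite.op b • m
      map_add' := fun m m' => smul_add _ m m'
      map_smul' := fun c m => smul_comm (MulOpposite.op b) c m }

/-- The left action of `a` on the `M`-factor of `M ⊗ A`. -/
noncomputable def lsm₁ (k A M : Type) [Field k] [Ring A] [Algebra k A]
    [AddCommGroup M] [Module k M] [Module A M] [SMulCommClass A k M]
    (a : A) : M ⊗[k] A →ₗ[k] M ⊗[k] A :=
  LinearMap.rTensor A
    { toFun := fun m => a • m
      map_add' := fun m m' => smul_add a m m'
      map_smul' := fun c m => smul_comm a c m }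

/-- `∇ℓ : M → Ω¹A ⊗_A M ⊆ A ⊗ₖ M` is a left connection. -/
noncomputable def IsLeftConn (nl : M →ₗ[k] A ⊗[k] M) : Prop :=
  (∀ m : M, actL k A M (nl m) = 0) ∧
  (∀ (b : A) (m : M), nl (MulOpposite.op b • m) = rop₂ k A M b (nl m)) ∧
  (∀ (a : A) (m : M),
    nl (a • m) = lmul₁ k A M a (nl m) + a ⊗ₜ m - 1 ⊗ₜ (a • m))

/-- `∇r : M → M ⊗_A Ω¹A ⊆ M ⊗ₖ A` is a right connection. -/
noncomputable def IsRightConn (nr : M →ₗ[k] M ⊗[k] A) : Prop :=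
  (∀ m : M, actR k A M (nr m) = 0) ∧
  (∀ (a : A) (m : M), nr (a • m) = lsm₁ k A M a (nr m)) ∧
  (∀ (b : A) (m : M),
    nr (MulOpposite.op b • m)
      = rmul₂ k A M b (nr m) + m ⊗ₜ b - (MulOpposite.op b • m) ⊗ₜ 1)

section Stmt16Aux

set_option linter.unusedSectionVars false

variable {k A M : Type} [Field k] [Ring A] [Algebra k A]
  [AddCommGroup M] [Module k M] [Module A M] [Module Aᵐᵒᵖ M]
  [IsScalarTower k A M] [IsScalarTower k Aᵐᵒᵖ M] [SMulCommClass A Aᵐᵒᵖ M]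
  [SMulCommClass A k M] [SMulCommClass Aᵐᵒᵖ k M]

/-- The total action map `(A ⊗ Aᵐᵒᵖ) ⊗ M → M` as a `k`-linear map. -/
noncomputable def bigAct : (A ⊗[k] Aᵐᵒᵖ) ⊗[k] M →ₗ[k] M :=
  TensorProduct.lift TensorProduct.Algebra.moduleAux

/-- `(a ⊗ b) ⊗ m ↦ a ⊗ (b • m)`. -/
noncomputable def phi : (A ⊗[k] Aᵐᵒᵖ) ⊗[k] M →ₗ[k] A ⊗[k] M :=
  (LinearMap.lTensor A (actL k Aᵐᵒᵖ M)) ∘ₗ (TensorProduct.assoc k A Aᵐᵒᵖ M).toLinearMap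

lemma actL_tmul (a : A) (m : M) : actL k A M (a ⊗ₜ[k] m) = a • m := by simp [actL]

lemma actR_tmul (m : M) (b : A) :
    actR k A M (m ⊗ₜ[k] b) = MulOpposite.op b • m := by simp [actR]

lemma phi_tmul (a : A) (b : Aᵐᵒᵖ) (m : M) :
    phi ((a ⊗ₜ[k] b) ⊗ₜ[k] m) = a ⊗ₜ[k] (b • m) := by simp [phi, actL]

lemma phi_smul_left (a : A) (x : (A ⊗[k] Aᵐᵒᵖ) ⊗[k] M) :
    phi ((a ⊗ₜ[k] (1:Aᵐᵒᵖ)) • x) = lmul₁ k A M a (phi x) := by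
  induction x using TensorProduct.induction_on with
  | zero => simp
  | tmul r m =>
    rw [TensorProduct.smul_tmul', smul_eq_mul]
    induction r using TensorProduct.induction_on with
    | zero => simp
    | tmul a' b' =>
      rw [Algebra.TensorProduct.tmul_mul_tmul, one_mul, phi_tmul, phi_tmul]
      simp [lmul₁]
    | add x y hx hy =>
      rw [mul_add, TensorProduct.add_tmul, TensorProduct.add_tmul, map_add, map_add,
        map_add, hx, hy]
  | add x y hx hy => rw [smul_add, map_add, map_add, map_add, hx, hy]

lemma phi_smul_right (b : A) (x : (A ⊗[k] Aᵐᵒᵖ) ⊗[k] M) :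
    phi (((1:A) ⊗ₜ[k] (MulOpposite.op b)) • x) = rop₂ k A M b (phi x) := by
  induction x using TensorProduct.induction_on with
  | zero => simp
  | tmul r m =>
    rw [TensorProduct.smul_tmul', smul_eq_mul]
    induction r using TensorProduct.induction_on with
    | zero => simp
    | tmul a' b' =>
      rw [Algebra.TensorProduct.tmul_mul_tmul, one_mul, phi_tmul, phi_tmul]
      simp [rop₂, mul_smul]
    | add x y hx hy =>
      rw [mul_add, TensorProduct.add_tmul, TensorProduct.add_tmul, map_add, map_add,
        map_add, hx, hy]
  | add x y hx hy => rw [smul_add, map_add, map_add, map_add, hx, hy]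

/-- `a ⊗ (m ⊗ b) ↦ (a ⊗ op b) ⊗ m`. -/
noncomputable def tau : A ⊗[k] (M ⊗[k] A) →ₗ[k] (A ⊗[k] Aᵐᵒᵖ) ⊗[k] M :=
  (LinearMap.rTensor M
      (TensorProduct.map LinearMap.id (MulOpposite.opLinearEquiv k).toLinearMap)) ∘ₗ
    (TensorProduct.assoc k A A M).symm.toLinearMap ∘ₗ
      (LinearMap.lTensor A (TensorProduct.comm k M A).toLinearMap)

lemma tau_tmul (a : A) (m : M) (b : A) :
    tau (a ⊗ₜ[k] (m ⊗ₜ[k] b)) = (a ⊗ₜ[k] MulOpposite.op b) ⊗ₜ[k] m := by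
  simp [tau]

lemma tau_mul_left (a a' : A) (y : M ⊗[k] A) :
    tau ((a * a') ⊗ₜ[k] y) = (a ⊗ₜ[k] (1:Aᵐᵒᵖ)) • tau (a' ⊗ₜ[k] y) := by
  induction y using TensorProduct.induction_on with
  | zero => simp
  | tmul m b =>
    rw [tau_tmul, tau_tmul, TensorProduct.smul_tmul', smul_eq_mul,
      Algebra.TensorProduct.tmul_mul_tmul, one_mul]
  | add x y hx hy =>
    rw [TensorProduct.tmul_add, TensorProduct.tmul_add, map_add, map_add, hx, hy, smul_add]

lemma tau_mul_right (a' b : A) (y : M ⊗[k] A) :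
    tau (a' ⊗ₜ[k] (rmul₂ k A M b y))
      = ((1:A) ⊗ₜ[k] MulOpposite.op b) • tau (a' ⊗ₜ[k] y) := by
  induction y using TensorProduct.induction_on with
  | zero => simp
  | tmul m c =>
    rw [show rmul₂ k A M b (m ⊗ₜ[k] c) = m ⊗ₜ[k] (c * b) from by simp [rmul₂]]
    rw [tau_tmul, tau_tmul, TensorProduct.smul_tmul', smul_eq_mul,
      Algebra.TensorProduct.tmul_mul_tmul, one_mul, ← MulOpposite.op_mul]
  | add x y hx hy =>
    rw [map_add, TensorProduct.tmul_add, TensorProduct.tmul_add, map_add, map_add,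
      hx, hy, smul_add]

section WithInst
variable [inst : Module (A ⊗[k] Aᵐᵒᵖ) M]
  (hsm : ∀ (a : A) (b : Aᵐᵒᵖ) (m : M), (a ⊗ₜ[k] b) • m = a • b • m)

include hsm

lemma bigAct_eq_smul (r : A ⊗[k] Aᵐᵒᵖ) (m : M) : bigAct (r ⊗ₜ[k] m) = r • m := by
  induction r using TensorProduct.induction_on with
  | zero => rw [TensorProduct.zero_tmul, map_zero]; exact (zero_smul (A ⊗[k] Aᵐᵒᵖ) m).symm
  | tmul a b => rw [hsm a b m]; simp [bigAct, TensorProduct.Algebra.moduleAux_apply]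
  | add x y hx hy => rw [TensorProduct.add_tmul, map_add, hx, hy, add_smul]

lemma actL_phi (x : (A ⊗[k] Aᵐᵒᵖ) ⊗[k] M) : actL k A M (phi x) = bigAct x := by
  induction x using TensorProduct.induction_on with
  | zero => simp
  | tmul r m =>
    induction r using TensorProduct.induction_on with
    | zero => simp
    | tmul a b => rw [phi_tmul, bigAct_eq_smul hsm, hsm, actL_tmul]
    | add x y hx hy => rw [TensorProduct.add_tmul, map_add, map_add, map_add, hx, hy]
  | add x y hx hy => rw [map_add, map_add, map_add, hx, hy]

/-- The action map as an `(A ⊗ Aᵐᵒᵖ)`-linear map. -/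
noncomputable def bigActR : (A ⊗[k] Aᵐᵒᵖ) ⊗[k] M →ₗ[A ⊗[k] Aᵐᵒᵖ] M :=
  { toFun := fun x => bigAct x
    map_add' := fun x y => map_add _ x y
    map_smul' := fun r x => by
      simp only [RingHom.id_apply]
      induction x using TensorProduct.induction_on with
      | zero => rw [smul_zero, map_zero, smul_zero]
      | tmul r' m =>
        rw [TensorProduct.smul_tmul', smul_eq_mul, bigAct_eq_smul hsm,
          bigAct_eq_smul hsm, mul_smul]
      | add x y hx hy => rw [smul_add, map_add, map_add, hx, hy, smul_add] }

lemma bigAct_tau (a : A) (y : M ⊗[k] A) :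
    bigAct (tau (a ⊗ₜ[k] y)) = a • actR k A M y := by
  induction y using TensorProduct.induction_on with
  | zero => simp
  | tmul m b => rw [tau_tmul, actR_tmul, bigAct_eq_smul hsm, hsm]
  | add x y hx hy =>
    rw [TensorProduct.tmul_add, map_add, map_add, map_add, hx, hy, smul_add]

lemma forward_dir (hproj : Module.Projective (A ⊗[k] Aᵐᵒᵖ) M) :
    ∃ nl : M →ₗ[k] A ⊗[k] M, IsLeftConn nl := by
  have hFsurj : Function.Surjective (bigActR (k := k) (A := A) (M := M) hsm) := fun m =>
    ⟨(1 : A ⊗[k] Aᵐᵒᵖ) ⊗ₜ[k] m, by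
      show bigAct _ = m
      rw [bigAct_eq_smul hsm, one_smul]⟩
  obtain ⟨S, hS⟩ := Module.projective_lifting_property (bigActR hsm) LinearMap.id hFsurj
  have hSap : ∀ m : M, bigAct (S m) = m := fun m => by
    have := congrArg (fun f => f m) hS
    simpa [bigActR] using this
  have hsmulk : ∀ (c : k) (m : M), (c • (1 : A ⊗[k] Aᵐᵒᵖ)) • m = c • m := by
    intro c m
    rw [Algebra.TensorProduct.one_def, TensorProduct.smul_tmul', hsm, one_smul,
      smul_assoc, one_smul]
  let shat : M →ₗ[k] A ⊗[k] M :=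
    { toFun := fun m => phi (S m)
      map_add' := fun m m' => by
        show phi (S (m + m')) = phi (S m) + phi (S m')
        rw [map_add, map_add]
      map_smul' := fun c m => by
        simp only [RingHom.id_apply]
        show phi (S (c • m)) = c • phi (S m)
        rw [← hsmulk c m, map_smul, smul_assoc, one_smul, map_smul] }
  refine ⟨shat - (TensorProduct.mk k A M 1), ?_, ?_, ?_⟩
  · intro m
    simp only [LinearMap.sub_apply, map_sub, TensorProduct.mk_apply]
    rw [show shat m = phi (S m) from rfl, actL_phi hsm, hSap, actL_tmul, one_smul,
      sub_self]
  · intro b m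
    simp only [LinearMap.sub_apply, map_sub, TensorProduct.mk_apply]
    have h1 : shat (MulOpposite.op b • m) = rop₂ k A M b (shat m) := by
      show phi (S (MulOpposite.op b • m)) = _
      rw [show MulOpposite.op b • m = ((1:A) ⊗ₜ[k] MulOpposite.op b) • m from by
        rw [hsm, one_smul]]
      rw [map_smul, phi_smul_right]
      rfl
    rw [h1]
    simp [rop₂]
  · intro a m
    simp only [LinearMap.sub_apply, map_sub, TensorProduct.mk_apply]
    have h1 : shat (a • m) = lmul₁ k A M a (shat m) := by
      show phi (S (a • m)) = _
      rw [show a • m = ((a ⊗ₜ[k] (1:Aᵐᵒᵖ))) • m from by rw [hsm, one_smul]]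
      rw [map_smul, phi_smul_left]
      rfl
    rw [h1]
    have h2 : lmul₁ k A M a ((1:A) ⊗ₜ[k] m) = a ⊗ₜ[k] m := by simp [lmul₁]
    rw [h2]
    abel

lemma backward_dir (nl : M →ₗ[k] A ⊗[k] M) (nr : M →ₗ[k] M ⊗[k] A)
    (hl : IsLeftConn nl) (hr : IsRightConn nr) :
    Module.Projective (A ⊗[k] Aᵐᵒᵖ) M := by
  obtain ⟨hl1, hl2, hl3⟩ := hl
  obtain ⟨hr1, hr2, hr3⟩ := hr
  -- the bimodule sections
  let s : M →ₗ[k] A ⊗[k] M := TensorProduct.mk k A M 1 + nl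
  let s' : M →ₗ[k] M ⊗[k] A := (TensorProduct.mk k M A).flip 1 + nr
  have hs_def : ∀ m : M, s m = (1:A) ⊗ₜ[k] m + nl m := fun m => rfl
  have hs'_def : ∀ m : M, s' m = m ⊗ₜ[k] (1:A) + nr m := fun m => rfl
  have hsL : ∀ (m : M), actL k A M (s m) = m := by
    intro m
    rw [hs_def, map_add, hl1, actL_tmul, one_smul, add_zero]
  have hs'R : ∀ (m : M), actR k A M (s' m) = m := by
    intro m
    rw [hs'_def, map_add, hr1, actR_tmul, MulOpposite.op_one, one_smul, add_zero]
  have hsa : ∀ (a : A) (m : M), s (a • m) = lmul₁ k A M a (s m) := by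
    intro a m
    rw [hs_def, hs_def, map_add, hl3]
    have : lmul₁ k A M a ((1:A) ⊗ₜ[k] m) = a ⊗ₜ[k] m := by simp [lmul₁]
    rw [this]
    abel
  have hsb : ∀ (b : A) (m : M), s (MulOpposite.op b • m) = rop₂ k A M b (s m) := by
    intro b m
    rw [hs_def, hs_def, map_add, hl2]
    have : rop₂ k A M b ((1:A) ⊗ₜ[k] m) = (1:A) ⊗ₜ[k] (MulOpposite.op b • m) := by
      simp [rop₂]
    rw [this]
  have hs'b : ∀ (b : A) (m : M), s' (MulOpposite.op b • m) = rmul₂ k A M b (s' m) := by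
    intro b m
    rw [hs'_def, hs'_def, map_add, hr3]
    have : rmul₂ k A M b (m ⊗ₜ[k] (1:A)) = m ⊗ₜ[k] b := by simp [rmul₂]
    rw [this]
    abel
  -- the composite section σ
  have Kone : ∀ (a : A) (x : A ⊗[k] M),
      tau (LinearMap.lTensor A s' (lmul₁ k A M a x))
        = (a ⊗ₜ[k] (1:Aᵐᵒᵖ)) • tau (LinearMap.lTensor A s' x) := by
    intro a x
    induction x using TensorProduct.induction_on with
    | zero => simp
    | tmul a' m =>
      rw [show lmul₁ k A M a (a' ⊗ₜ[k] m) = (a * a') ⊗ₜ[k] m from by simp [lmul₁],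
        LinearMap.lTensor_tmul, LinearMap.lTensor_tmul, tau_mul_left]
    | add x y hx hy => simp only [map_add, smul_add]; rw [hx, hy]
  have Ktwo : ∀ (b : A) (x : A ⊗[k] M),
      tau (LinearMap.lTensor A s' (rop₂ k A M b x))
        = ((1:A) ⊗ₜ[k] MulOpposite.op b) • tau (LinearMap.lTensor A s' x) := by
    intro b x
    induction x using TensorProduct.induction_on with
    | zero => simp
    | tmul a' m =>
      rw [show rop₂ k A M b (a' ⊗ₜ[k] m) = a' ⊗ₜ[k] (MulOpposite.op b • m) from by
        simp [rop₂],
        LinearMap.lTensor_tmul, LinearMap.lTensor_tmul, hs'b, tau_mul_right]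
    | add x y hx hy => simp only [map_add, smul_add]; rw [hx, hy]
  have Kact : ∀ x : A ⊗[k] M,
      bigAct (tau (LinearMap.lTensor A s' x)) = actL k A M x := by
    intro x
    induction x using TensorProduct.induction_on with
    | zero => simp
    | tmul a m =>
      rw [LinearMap.lTensor_tmul, bigAct_tau hsm, hs'R, actL_tmul]
    | add x y hx hy => simp only [map_add]; rw [hx, hy]
  let sigma : M →ₗ[A ⊗[k] Aᵐᵒᵖ] (A ⊗[k] Aᵐᵒᵖ) ⊗[k] M :=
    { toFun := fun m => tau (LinearMap.lTensor A s' (s m))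
      map_add' := fun m m' => by
        show tau (LinearMap.lTensor A s' (s (m + m')))
            = tau (LinearMap.lTensor A s' (s m)) + tau (LinearMap.lTensor A s' (s m'))
        rw [map_add, map_add, map_add]
      map_smul' := fun r m => by
        simp only [RingHom.id_apply]
        induction r using TensorProduct.induction_on with
        | zero => rw [show (0 : A ⊗[k] Aᵐᵒᵖ) • m = 0 from zero_smul (A ⊗[k] Aᵐᵒᵖ) m, map_zero, map_zero, map_zero]; exact (zero_smul (A ⊗[k] Aᵐᵒᵖ) (tau (LinearMap.lTensor A s' (s m)))).symm
        | tmul a b =>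
          rw [hsm a b m]
          rw [show b • m = MulOpposite.op (MulOpposite.unop b) • m from by
            rw [MulOpposite.op_unop]]
          rw [hsa, Kone, hsb, Ktwo]
          have h := mul_smul (a ⊗ₜ[k] (1:Aᵐᵒᵖ))
            ((1:A) ⊗ₜ[k] MulOpposite.op (MulOpposite.unop b))
            (tau (LinearMap.lTensor A s' (s m)))
          rw [Algebra.TensorProduct.tmul_mul_tmul, mul_one, one_mul,
            MulOpposite.op_unop] at h
          exact h.symm
        | add x y hx hy =>
          rw [add_smul, add_smul, map_add, map_add, map_add, hx, hy] }
  have hcomp : (bigActR (k := k) (A := A) (M := M) hsm).comp sigma = LinearMap.id := by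
    apply LinearMap.ext
    intro m
    show bigAct (tau (LinearMap.lTensor A s' (s m))) = m
    rw [Kact, hsL]
  exact Module.Projective.of_split sigma (bigActR hsm) hcomp

end WithInst
end Stmt16Aux


/-- a left connection on the `A`-bimodule `M` exists if `M` is
projective over `A ⊗ Aᵐᵒᵖ`; conversely, if a bimodule connection `(∇ℓ, ∇r)`
exists then `M` is projective over `A ⊗ Aᵐᵒᵖ`. -/
theorem stmt_16 :
    letI : Module (A ⊗[k] Aᵐᵒᵖ) M := TensorProduct.Algebra.module
    (Module.Projective (A ⊗[k] Aᵐᵒᵖ) M →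
        ∃ nl : M →ₗ[k] A ⊗[k] M, IsLeftConn nl) ∧
    ((∃ (nl : M →ₗ[k] A ⊗[k] M) (nr : M →ₗ[k] M ⊗[k] A),
        IsLeftConn nl ∧ IsRightConn nr) →
      Module.Projective (A ⊗[k] Aᵐᵒᵖ) M) := by
  letI : Module (A ⊗[k] Aᵐᵒᵖ) M := TensorProduct.Algebra.module
  exact ⟨fun hproj =>
      forward_dir (fun a b m => TensorProduct.Algebra.smul_def a b m) hproj,
    fun ⟨nl, nr, hl, hr⟩ =>
      backward_dir (fun a b m => TensorProduct.Algebra.smul_def a b m) nl nr hl hr⟩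

end
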